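/- Global convergence rate of the accelerated method: under the acceleration invariant, for any minimizer P* of f, f(P^N) − f(P*) ≤ ρ_N ( f(P^0) − f(P*) + σ D_h(P*, P^0) ) + δ_N. -/
import Mathlib


theorem accelerated_global_rate {E : Type*}
    (f : E → ℝ) (D : E → E → ℝ)
    (σ : ℝ) (hσ : 0 < σ)
    (θ ν δ : ℕ → ℝ) (hθ : ∀ i, θ i ∈ Set.Icc (0 : ℝ) 1) (hν : ∀ k, 0 ≤ ν k)
    (hδ0 : δ 0 = 0) (hδ : ∀ k, δ (k + 1) = (1 - θ k) * δ k + ν k)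
    (P Z : ℕ → E) (φ : ℕ → E → ℝ)
    (hφ0 : ∀ Q, φ 0 Q = f (P 0) + σ * D Q (P 0))
    (hinv : ∀ N, f (P N) ≤ φ N (Z N) + δ N)
    (hgap : ∀ N Q, φ N Q - f Q ≤ (∏ i ∈ Finset.range N, (1 - θ i)) * (φ 0 Q - f Q))
    (hZ : ∀ N Q, φ N (Z N) ≤ φ N Q)
    (Pstar : E) (hmin : ∀ Q, f Pstar ≤ f Q) (N : ℕ) :
    f (P N) - f Pstar ≤
      (∏ i ∈ Finset.range N, (1 - θ i)) *
        (f (P 0) - f Pstar + σ * D Pstar (P 0)) + δ N := by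
  have h1 := hinv N
  have h2 := hZ N Pstar
  have h3 := hgap N Pstar
  have h4 := hφ0 Pstar
  have : φ 0 Pstar - f Pstar = f (P 0) - f Pstar + σ * D Pstar (P 0) := by
    rw [h4]; ring
  rw [this] at h3
  linarith
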